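/- Let ξ : ℝ³ → [0,1] be a bounded measurable function, P⁰ an orthogonal projector, and Q a self-adjoint Hilbert–Schmidt operator with 0 ≤ Q + P⁰ ≤ 1. Then the localized inequality ξ Q² ξ ≤ ξ Q⁺⁺ ξ − ξ Q⁻⁻ ξ holds, where ξ also denotes the multiplication operator by ξ. -/

import Mathlib

open ContinuousLinearMap MeasureTheory

/-- `Q` is a Hilbert–Schmidt operator: `∑ ‖Q e i‖²` is finite for some
(equivalently, any) Hilbert basis. -/
def IsHilbertSchmidt {H : Type*} [NormedAddCommGroup H] [InnerProductSpace ℂ H]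
    [CompleteSpace H] (Q : H →L[ℂ] H) : Prop :=
  ∃ (ι : Type) (b : HilbertBasis ι ℂ H), Summable fun i => ‖Q (b i)‖ ^ 2

theorem key_aux {E : Type*} [NormedAddCommGroup E] [InnerProductSpace ℂ E] [CompleteSpace E]
    (R : E →L[ℂ] E) (hR0 : 0 ≤ R) (hR1 : 0 ≤ 1 - R) : 0 ≤ R - R * R := by
    set s := CFC.sqrt R with hs
    have hss : s * s = R := CFC.sqrt_mul_sqrt_self R hR0
    have hssa : IsSelfAdjoint s := (CFC.sqrt_nonneg (a := R)).isSelfAdjoint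
    have hcomm : s * R = R * s := by rw [← hss, mul_assoc]
    have : (0 : E →L[ℂ] E) ≤ star s * (1 - R) * s := star_left_conjugate_nonneg hR1 s
    calc (0 : E →L[ℂ] E) ≤ star s * (1 - R) * s := this
    _ = R - R * R := by
        rw [hssa.star_eq]
        rw [mul_sub, mul_one, sub_mul, hss, mul_assoc, ← hcomm, ← mul_assoc, hss]

set_option maxHeartbeats 2000000 in
set_option synthInstance.maxHeartbeats 500000 in
theorem stmt_4
    (ξ : EuclideanSpace ℝ (Fin 3) → ℝ) (hξmeas : Measurable ξ)
    (hξ01 : ∀ x, ξ x ∈ Set.Icc (0:ℝ) 1)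
    (M : Lp ℂ 2 (volume : Measure (EuclideanSpace ℝ (Fin 3)))
        →L[ℂ] Lp ℂ 2 (volume : Measure (EuclideanSpace ℝ (Fin 3))))
    (hM : ∀ f : Lp ℂ 2 (volume : Measure (EuclideanSpace ℝ (Fin 3))),
      (M f : EuclideanSpace ℝ (Fin 3) → ℂ) =ᵐ[volume] fun x => (ξ x : ℂ) * f x)
    (Q P0 : Lp ℂ 2 (volume : Measure (EuclideanSpace ℝ (Fin 3)))
        →L[ℂ] Lp ℂ 2 (volume : Measure (EuclideanSpace ℝ (Fin 3))))
    (hQsa : IsSelfAdjoint Q) (hQhs : IsHilbertSchmidt Q)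
    (hP0 : IsIdempotentElem P0) (hP0sa : IsSelfAdjoint P0)
    (hpos : (Q + P0).IsPositive) (hle : (1 - (Q + P0)).IsPositive) :
    (M * ((1 - P0) * Q * (1 - P0)) * M - M * (P0 * Q * P0) * M
      - M * (Q * Q) * M).IsPositive := by
  set H := Lp ℂ 2 (volume : Measure (EuclideanSpace ℝ (Fin 3)))
  -- M is self-adjoint
  have hMsa : IsSelfAdjoint M := by
    rw [ContinuousLinearMap.isSelfAdjoint_iff_isSymmetric]
    intro f g
    simp only [ContinuousLinearMap.coe_coe]
    rw [MeasureTheory.L2.inner_def, MeasureTheory.L2.inner_def]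
    refine integral_congr_ae ?_
    filter_upwards [hM f, hM g] with x hf hg
    simp only [hf, hg, RCLike.inner_apply, map_mul, Complex.conj_ofReal]
    ring
  -- the key operator R
  set R : H →L[ℂ] H := Q + P0 with hR
  have hR0 : (0 : H →L[ℂ] H) ≤ R := (ContinuousLinearMap.nonneg_iff_isPositive R).mpr hpos
  have hR1 : (0 : H →L[ℂ] H) ≤ 1 - R := by
    rw [ContinuousLinearMap.nonneg_iff_isPositive]
    simpa using hle
  -- R - R * R is nonneg via sqrt conjugation
  have key : (0 : H →L[ℂ] H) ≤ R - R * R := by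
    exact key_aux R hR0 hR1
  -- identify the target operator
  have halg : (1 - P0) * Q * (1 - P0) - P0 * Q * P0 - Q * Q = R - R * R := by
    have h1 : P0 * P0 = P0 := hP0
    rw [hR]
    simp only [mul_sub, sub_mul, mul_one, one_mul, add_mul, mul_add, h1]
    abel
  have hA : (0 : H →L[ℂ] H) ≤ star M *
      ((1 - P0) * Q * (1 - P0) - P0 * Q * P0 - Q * Q) * M := by
    rw [halg]; exact star_left_conjugate_nonneg key M
  rw [← ContinuousLinearMap.nonneg_iff_isPositive]
  calc (0 : H →L[ℂ] H)
      ≤ star M * ((1 - P0) * Q * (1 - P0) - P0 * Q * P0 - Q * Q) * M := hA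
    _ = M * ((1 - P0) * Q * (1 - P0)) * M - M * (P0 * Q * P0) * M - M * (Q * Q) * M := by
        rw [hMsa.star_eq]; noncomm_ring
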